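/- If m = 2 then G₂ is a complete bipartite graph and its diameter is 2; if m ≥ 3 then the diameter of G₂ is 3. -/

import Mathlib

open Finset

abbrev NN (m : ℕ) (p : Fin m → ℕ) : ℕ := ∏ i, p i

abbrev Vtx (m : ℕ) (p : Fin m → ℕ) : Type :=
  {x : ZMod (NN m p) // x ≠ 0 ∧ ¬ IsUnit x}

/-- The induced subgraph `G₂` of the comaximal graph of `ℤ/nℤ` on nonzero nonunits. -/
def G2 (m : ℕ) (p : Fin m → ℕ) : SimpleGraph (Vtx m p) where
  Adj x y := x ≠ y ∧ Ideal.span ({x.1, y.1} : Set (ZMod (NN m p))) = ⊤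
  symm := by
    constructor
    rintro x y ⟨hxy, h⟩
    exact ⟨hxy.symm, by rwa [Set.pair_comm]⟩
  loopless := by constructor; rintro x ⟨h, -⟩; exact h rfl

/-- The zero-set of `x`: indices `i` where the image of `x` in `ℤ/p_iℤ` is zero. -/
def Z (m : ℕ) (p : Fin m → ℕ) (x : ZMod (NN m p)) : Finset (Fin m) :=
  Finset.univ.filter fun i =>
    (ZMod.castHom (Finset.dvd_prod_of_mem p (Finset.mem_univ i)) (ZMod (p i))) x = 0

/-- The class `X_S` of vertices of `G₂` with zero-set `S`. -/
def XS (m : ℕ) (p : Fin m → ℕ) (S : Finset (Fin m)) : Set (Vtx m p) :=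
  {x | Z m p x.1 = S}

/-- Diameter: the maximum over all pairs of vertices of the graph distance. -/
noncomputable def gdiam {V : Type*} (G : SimpleGraph V) : ℕ :=
  sSup {d | ∃ x y, G.dist x y = d}

section Aux
variable {m : ℕ} {p : Fin m → ℕ}

lemma pcop (hp : ∀ i, (p i).Prime) (hmono : StrictMono p) : Pairwise (Function.onFun Nat.Coprime p) :=
  fun i j h => (Nat.coprime_primes (hp i) (hp j)).mpr fun e => h (hmono.injective e)

noncomputable def phi (hp : ∀ i, (p i).Prime) (hmono : StrictMono p) :
    ZMod (NN m p) ≃+* Π i, ZMod (p i) :=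
  ZMod.prodEquivPi p (pcop hp hmono)

lemma phi_apply (hp : ∀ i, (p i).Prime) (hmono : StrictMono p) (x : ZMod (NN m p)) (i : Fin m) :
    phi hp hmono x i =
      ZMod.castHom (Finset.dvd_prod_of_mem p (Finset.mem_univ i)) (ZMod (p i)) x := by
  have h := RingHom.ext_zmod
    ((Pi.evalRingHom (fun i => ZMod (p i)) i).comp
      ((phi hp hmono : ZMod (NN m p) ≃+* Π i, ZMod (p i)) : ZMod (NN m p) →+* Π i, ZMod (p i)))
    (ZMod.castHom (Finset.dvd_prod_of_mem p (Finset.mem_univ i)) (ZMod (p i)))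
  exact DFunLike.congr_fun h x

lemma mem_Z (hp : ∀ i, (p i).Prime) (hmono : StrictMono p) (x : ZMod (NN m p)) (i : Fin m) :
    i ∈ Z m p x ↔ phi hp hmono x i = 0 := by
  unfold Z
  rw [Finset.mem_filter, phi_apply hp hmono]
  simp

lemma Z_eq_univ_iff (hp : ∀ i, (p i).Prime) (hmono : StrictMono p) (x : ZMod (NN m p)) :
    x = 0 ↔ Z m p x = univ := by
  rw [← (phi hp hmono).map_eq_zero_iff, funext_iff]
  simp only [Finset.eq_univ_iff_forall, mem_Z hp hmono, Pi.zero_apply]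

lemma Z_eq_empty_iff (hp : ∀ i, (p i).Prime) (hmono : StrictMono p) (x : ZMod (NN m p)) :
    IsUnit x ↔ Z m p x = ∅ := by
  haveI : ∀ i, Fact (p i).Prime := fun i => ⟨hp i⟩
  rw [Finset.eq_empty_iff_forall_notMem]
  simp only [mem_Z hp hmono]
  constructor
  · rintro ⟨u, rfl⟩ i h
    have : IsUnit (phi hp hmono (u : ZMod (NN m p)) i) :=
      (u.isUnit.map (phi hp hmono)).map (Pi.evalRingHom (fun i => ZMod (p i)) i)
    rw [h] at this
    exact this.ne_zero rfl
  · intro h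
    rw [isUnit_iff_exists_inv]
    refine ⟨(phi hp hmono).symm (fun i => (phi hp hmono x i)⁻¹), ?_⟩
    apply (phi hp hmono).injective
    rw [map_mul, map_one, (phi hp hmono).apply_symm_apply]
    funext i
    exact mul_inv_cancel₀ (h i) |>.trans rfl

lemma span_top_iff (hp : ∀ i, (p i).Prime) (hmono : StrictMono p) (x y : ZMod (NN m p)) :
    Ideal.span ({x, y} : Set (ZMod (NN m p))) = ⊤ ↔ Z m p x ∩ Z m p y = ∅ := by
  haveI : ∀ i, Fact (p i).Prime := fun i => ⟨hp i⟩
  rw [Ideal.eq_top_iff_one, Ideal.mem_span_pair, Finset.eq_empty_iff_forall_notMem]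
  constructor
  · rintro ⟨a, b, hab⟩ i hi
    rw [Finset.mem_inter, mem_Z hp hmono, mem_Z hp hmono] at hi
    have := congrFun (congrArg (phi hp hmono) hab) i
    rw [map_add, map_mul, map_mul, map_one] at this
    simp only [Pi.add_apply, Pi.mul_apply, Pi.one_apply, hi.1, hi.2, mul_zero, add_zero] at this
    exact zero_ne_one this
  · intro h
    refine ⟨(phi hp hmono).symm (fun i => (phi hp hmono x i)⁻¹),
      (phi hp hmono).symm (fun i => if phi hp hmono x i = 0 then (phi hp hmono y i)⁻¹ else 0), ?_⟩
    apply (phi hp hmono).injective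
    rw [map_add, map_mul, map_mul, map_one, (phi hp hmono).apply_symm_apply,
      (phi hp hmono).apply_symm_apply]
    funext i
    by_cases hx : phi hp hmono x i = 0
    · have hy : phi hp hmono y i ≠ 0 := by
        intro hy
        exact h i (Finset.mem_inter.mpr ⟨(mem_Z hp hmono x i).mpr hx, (mem_Z hp hmono y i).mpr hy⟩)
      simp [hx, hy, inv_mul_cancel₀ hy]
    · simp [hx, inv_mul_cancel₀ hx]

/-- element with prescribed zero-set -/
noncomputable def vOf (hp : ∀ i, (p i).Prime) (hmono : StrictMono p) (S : Finset (Fin m)) :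
    ZMod (NN m p) :=
  (phi hp hmono).symm (fun i => if i ∈ S then 0 else 1)

lemma Z_vOf (hp : ∀ i, (p i).Prime) (hmono : StrictMono p) (S : Finset (Fin m)) :
    Z m p (vOf hp hmono S) = S := by
  haveI : ∀ i, Fact (p i).Prime := fun i => ⟨hp i⟩
  ext i
  rw [mem_Z hp hmono, vOf, (phi hp hmono).apply_symm_apply]
  by_cases h : i ∈ S <;> simp [h]

/-- a second element with prescribed zero-set (uses 2 instead of 1 off `S`). -/
noncomputable def vOf2 (hp : ∀ i, (p i).Prime) (hmono : StrictMono p) (S : Finset (Fin m)) :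
    ZMod (NN m p) :=
  (phi hp hmono).symm (fun i => if i ∈ S then 0 else 2)

lemma pz_two_ne_zero (hp : ∀ i, (p i).Prime) (i : Fin m) (h3 : 3 ≤ p i) :
    (2 : ZMod (p i)) ≠ 0 := by
  haveI : NeZero (p i) := ⟨(hp i).ne_zero⟩
  intro h
  rw [show ((2 : ZMod (p i))) = ((2 : ℕ) : ZMod (p i)) by push_cast; ring,
    ZMod.natCast_eq_zero_iff] at h
  exact absurd (Nat.le_of_dvd (by norm_num) h) (by omega)

lemma Z_vOf2 (hp : ∀ i, (p i).Prime) (hmono : StrictMono p) (S : Finset (Fin m))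
    (h3 : ∀ i ∉ S, 3 ≤ p i) : Z m p (vOf2 hp hmono S) = S := by
  ext i
  rw [mem_Z hp hmono, vOf2, (phi hp hmono).apply_symm_apply]
  by_cases h : i ∈ S 
  · simp [h]
  · simp [h, pz_two_ne_zero hp i (h3 i h)]

lemma vOf_ne_vOf2 (hp : ∀ i, (p i).Prime) (hmono : StrictMono p) (S : Finset (Fin m))
    (i : Fin m) (hi : i ∉ S) (h3 : 3 ≤ p i) : vOf hp hmono S ≠ vOf2 hp hmono S := by
  intro h
  have := congrFun ((phi hp hmono).symm.injective.eq_iff.mp h) i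
  simp only [hi, if_neg, if_false] at this
  rw [show ((1 : ZMod (p i))) = ((1 : ℕ) : ZMod (p i)) by push_cast; ring,
    show ((2 : ZMod (p i))) = ((2 : ℕ) : ZMod (p i)) by push_cast; ring,
    ZMod.natCast_eq_natCast_iff'] at this
  rw [Nat.mod_eq_of_lt (by omega), Nat.mod_eq_of_lt (by omega)] at this
  omega

-- vertex-level lemmas

lemma Z_nonempty (hp : ∀ i, (p i).Prime) (hmono : StrictMono p) (v : Vtx m p) :
    (Z m p v.1).Nonempty := by
  rw [Finset.nonempty_iff_ne_empty]
  exact fun h => v.2.2 ((Z_eq_empty_iff hp hmono v.1).mpr h)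

lemma Z_ne_univ (hp : ∀ i, (p i).Prime) (hmono : StrictMono p) (v : Vtx m p) :
    Z m p v.1 ≠ univ :=
  fun h => v.2.1 ((Z_eq_univ_iff hp hmono v.1).mpr h)

lemma adj_iff (hp : ∀ i, (p i).Prime) (hmono : StrictMono p) (u v : Vtx m p) :
    (G2 m p).Adj u v ↔ u ≠ v ∧ Z m p u.1 ∩ Z m p v.1 = ∅ :=
  and_congr_right' (span_top_iff hp hmono u.1 v.1)

lemma adj_of_disjoint (hp : ∀ i, (p i).Prime) (hmono : StrictMono p) (u v : Vtx m p)
    (h : Z m p u.1 ∩ Z m p v.1 = ∅) : (G2 m p).Adj u v := by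
  rw [adj_iff hp hmono]
  refine ⟨?_, h⟩
  rintro rfl
  rw [Finset.inter_self] at h
  exact (Z_nonempty hp hmono u).ne_empty h

/-- vertex with prescribed zero-set -/
noncomputable def mkV (hp : ∀ i, (p i).Prime) (hmono : StrictMono p) (S : Finset (Fin m))
    (h1 : S.Nonempty) (h2 : S ≠ univ) : Vtx m p :=
  ⟨vOf hp hmono S,
    fun h => h2 (by rw [← Z_vOf hp hmono S]; exact (Z_eq_univ_iff hp hmono _).mp h),
    fun h => h1.ne_empty (by rw [← Z_vOf hp hmono S]; exact (Z_eq_empty_iff hp hmono _).mp h)⟩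

lemma Z_mkV (hp : ∀ i, (p i).Prime) (hmono : StrictMono p) (S : Finset (Fin m))
    (h1 : S.Nonempty) (h2 : S ≠ univ) : Z m p (mkV hp hmono S h1 h2).1 = S :=
  Z_vOf hp hmono S

/-- every pair of vertices is joined by a walk of length at most 3 -/
lemma walk3 (hp : ∀ i, (p i).Prime) (hmono : StrictMono p) (u v : Vtx m p) :
    ∃ w : (G2 m p).Walk u v, w.length ≤ 3 := by
  by_cases huv : u = v
  · subst huv; exact ⟨SimpleGraph.Walk.nil, by simp⟩
  by_cases hd : Z m p u.1 ∩ Z m p v.1 = ∅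
  · exact ⟨(adj_of_disjoint hp hmono u v hd).toWalk, by simp⟩
  by_cases hU : Z m p u.1 ∪ Z m p v.1 = univ
  · -- walk of length 3 through complements
    have hZu := Z_nonempty hp hmono u
    have hZv := Z_nonempty hp hmono v
    have hu1 : (Z m p u.1)ᶜ.Nonempty := by
      rw [Finset.nonempty_iff_ne_empty, Ne, Finset.compl_eq_empty_iff]
      exact Z_ne_univ hp hmono u
    have hv1 : (Z m p v.1)ᶜ.Nonempty := by
      rw [Finset.nonempty_iff_ne_empty, Ne, Finset.compl_eq_empty_iff]
      exact Z_ne_univ hp hmono v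
    have hu2 : (Z m p u.1)ᶜ ≠ univ := (Finset.compl_ne_univ_iff_nonempty _).mpr hZu
    have hv2 : (Z m p v.1)ᶜ ≠ univ := (Finset.compl_ne_univ_iff_nonempty _).mpr hZv
    set a := mkV hp hmono _ hu1 hu2 with ha
    set b := mkV hp hmono _ hv1 hv2 with hb
    have h1 : (G2 m p).Adj u a := by
      apply adj_of_disjoint hp hmono
      rw [ha, Z_mkV]
      simp
    have h2 : (G2 m p).Adj a b := by
      apply adj_of_disjoint hp hmono
      rw [ha, hb, Z_mkV, Z_mkV, ← Finset.compl_union, hU, Finset.compl_univ]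
    have h3 : (G2 m p).Adj b v := by
      apply adj_of_disjoint hp hmono
      rw [hb, Z_mkV, Finset.inter_comm]
      exact Finset.inter_compl _
    exact ⟨.cons h1 (.cons h2 (.cons h3 .nil)), by simp⟩
  · have hc1 : (Z m p u.1 ∪ Z m p v.1)ᶜ.Nonempty := by
      rw [Finset.nonempty_iff_ne_empty, Ne, Finset.compl_eq_empty_iff]
      exact hU
    have hc2 : (Z m p u.1 ∪ Z m p v.1)ᶜ ≠ univ :=
      (Finset.compl_ne_univ_iff_nonempty _).mpr
        ((Z_nonempty hp hmono u).mono Finset.subset_union_left)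
    set c := mkV hp hmono _ hc1 hc2 with hc
    have h1 : (G2 m p).Adj u c := by
      apply adj_of_disjoint hp hmono
      rw [hc, Z_mkV]
      ext i
      simp only [Finset.mem_inter, Finset.mem_compl, Finset.mem_union, Finset.notMem_empty,
        iff_false, not_and, not_not]
      exact fun h => Or.inl h
    have h2 : (G2 m p).Adj c v := by
      apply adj_of_disjoint hp hmono
      rw [hc, Z_mkV]
      ext i
      simp only [Finset.mem_inter, Finset.mem_compl, Finset.mem_union, Finset.notMem_empty,
        iff_false, not_and]
      exact fun h hv => h (Or.inr hv)
    exact ⟨.cons h1 (.cons h2 .nil), by simp⟩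

lemma reachable (hp : ∀ i, (p i).Prime) (hmono : StrictMono p) (u v : Vtx m p) :
    (G2 m p).Reachable u v :=
  ⟨(walk3 hp hmono u v).choose⟩

lemma dist_le_three (hp : ∀ i, (p i).Prime) (hmono : StrictMono p) (u v : Vtx m p) :
    (G2 m p).dist u v ≤ 3 := by
  obtain ⟨w, hw⟩ := walk3 hp hmono u v
  exact le_trans (SimpleGraph.dist_le w) hw

lemma three_le_dist {V : Type*} (G : SimpleGraph V) (u v : V) (hne : u ≠ v)
    (hna : ¬ G.Adj u v) (hcom : ∀ w, ¬(G.Adj u w ∧ G.Adj w v)) (hreach : G.Reachable u v) :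
    3 ≤ G.dist u v := by
  have h0 : G.dist u v ≠ 0 := SimpleGraph.dist_ne_zero_iff_ne_and_reachable.mpr ⟨hne, hreach⟩
  have h1 : G.dist u v ≠ 1 := fun h => hna (SimpleGraph.dist_eq_one_iff_adj.mp h)
  have h2 : G.dist u v ≠ 2 := by
    intro h
    obtain ⟨w, hw⟩ := SimpleGraph.exists_walk_of_dist_ne_zero h0
    rw [h] at hw
    cases w with
    | nil => simp at hw
    | cons hadj w' =>
      cases w' with
      | nil => simp at hw
      | cons hadj' w'' =>
        have hl : w''.length = 0 := by
          simp only [SimpleGraph.Walk.length_cons] at hw; omega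
        have heq := SimpleGraph.Walk.eq_of_length_eq_zero hl
        subst heq
        exact hcom _ ⟨hadj, hadj'⟩
  omega

lemma dist_le_two_of_Z_eq (hp : ∀ i, (p i).Prime) (hmono : StrictMono p) (u v : Vtx m p)
    (h : Z m p u.1 = Z m p v.1) : (G2 m p).dist u v ≤ 2 := by
  have hc1 : (Z m p u.1)ᶜ.Nonempty := by
    rw [Finset.nonempty_iff_ne_empty, Ne, Finset.compl_eq_empty_iff]
    exact Z_ne_univ hp hmono u
  have hc2 : (Z m p u.1)ᶜ ≠ univ :=
    (Finset.compl_ne_univ_iff_nonempty _).mpr (Z_nonempty hp hmono u)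
  set c := mkV hp hmono _ hc1 hc2 with hc
  have h1 : (G2 m p).Adj u c := by
    apply adj_of_disjoint hp hmono
    rw [hc, Z_mkV]
    exact Finset.inter_compl _
  have h2 : (G2 m p).Adj c v := by
    apply adj_of_disjoint hp hmono
    rw [hc, Z_mkV, ← h, Finset.inter_comm]
    exact Finset.inter_compl _
  exact le_trans (SimpleGraph.dist_le (.cons h1 (.cons h2 .nil))) (by simp)

end Aux

theorem stmt17 (m : ℕ) (hm : 2 ≤ m) (p : Fin m → ℕ) (hp : ∀ i, (p i).Prime)
    (hmono : StrictMono p) :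
    (m = 2 →
      (∃ A : Set (Vtx m p), ∀ x y : Vtx m p,
        (G2 m p).Adj x y ↔ ((x ∈ A ∧ y ∉ A) ∨ (x ∉ A ∧ y ∈ A))) ∧
      gdiam (G2 m p) = 2) ∧
    (3 ≤ m → gdiam (G2 m p) = 3) := by
  constructor
  · -- m = 2
    rintro rfl
    have cls : ∀ S : Finset (Fin 2), S.Nonempty → S ≠ univ → S = {0} ∨ S = {1} := by decide
    have p1ge : 3 ≤ p 1 := by
      have h0 := (hp 0).two_le
      have h01 : p 0 < p 1 := hmono (by decide)
      omega
    constructor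
    · refine ⟨XS 2 p {0}, fun x y => ?_⟩
      have hxm : x ∈ XS 2 p {0} ↔ Z 2 p x.1 = {0} := Iff.rfl
      have hym : y ∈ XS 2 p {0} ↔ Z 2 p y.1 = {0} := Iff.rfl
      rcases cls _ (Z_nonempty hp hmono x) (Z_ne_univ hp hmono x) with hx | hx <;>
        rcases cls _ (Z_nonempty hp hmono y) (Z_ne_univ hp hmono y) with hy | hy
      · constructor
        · intro hadj
          rw [adj_iff hp hmono] at hadj
          rw [hx, hy] at hadj
          exact absurd hadj.2 (by decide)
        · rintro (⟨-, h⟩ | ⟨h, -⟩) <;> exact absurd (by assumption) (by simp [hxm, hym, hx, hy])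
      · constructor
        · intro _
          exact Or.inl ⟨hxm.mpr hx, fun h => by rw [hym.mp h] at hy; exact absurd hy (by decide)⟩
        · intro _
          apply adj_of_disjoint hp hmono
          rw [hx, hy]
          decide
      · constructor
        · intro _
          exact Or.inr ⟨fun h => by rw [hxm.mp h] at hx; exact absurd hx (by decide), hym.mpr hy⟩
        · intro _
          apply adj_of_disjoint hp hmono
          rw [hx, hy]
          decide
      · constructor
        · intro hadj
          rw [adj_iff hp hmono] at hadj
          rw [hx, hy] at hadj
          exact absurd hadj.2 (by decide)
        · rintro (⟨h, h'⟩ | ⟨h, h'⟩)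
          · exact absurd (hxm.mp h) (by rw [hx]; decide)
          · exact absurd (hym.mp h') (by rw [hy]; decide)
    · -- diameter 2
      have hub : ∀ x y : Vtx 2 p, (G2 2 p).dist x y ≤ 2 := by
        intro x y
        rcases cls _ (Z_nonempty hp hmono x) (Z_ne_univ hp hmono x) with hx | hx <;>
          rcases cls _ (Z_nonempty hp hmono y) (Z_ne_univ hp hmono y) with hy | hy
        · exact dist_le_two_of_Z_eq hp hmono x y (hx.trans hy.symm)
        · refine le_trans (SimpleGraph.dist_le (adj_of_disjoint hp hmono x y ?_).toWalk) ?_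
          · rw [hx, hy]; decide
          · simp
        · refine le_trans (SimpleGraph.dist_le (adj_of_disjoint hp hmono x y ?_).toWalk) ?_
          · rw [hx, hy]; decide
          · simp
        · exact dist_le_two_of_Z_eq hp hmono x y (hx.trans hy.symm)
      -- a pair at distance exactly 2
      have h30 : ∀ i : Fin 2, i ∉ ({0} : Finset (Fin 2)) → 3 ≤ p i := by
        intro i hi
        have : i = 1 := by revert hi; revert i; decide
        rw [this]; exact p1ge
      set u := mkV hp hmono ({0} : Finset (Fin 2)) ⟨0, Finset.mem_singleton_self 0⟩
        (by decide) with hu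
      have hZv2 : Z 2 p (vOf2 hp hmono ({0} : Finset (Fin 2))) = {0} :=
        Z_vOf2 hp hmono _ h30
      set v : Vtx 2 p := ⟨vOf2 hp hmono ({0} : Finset (Fin 2)),
        fun h => by
          rw [Z_eq_univ_iff hp hmono, hZv2] at h
          exact absurd h (by decide),
        fun h => by
          rw [Z_eq_empty_iff hp hmono, hZv2] at h
          exact absurd h (by decide)⟩ with hv
      have hZu : Z 2 p u.1 = {0} := Z_mkV hp hmono _ _ _
      have hne : u ≠ v := fun h =>
        vOf_ne_vOf2 hp hmono ({0} : Finset (Fin 2)) 1 (by decide) p1ge (congrArg Subtype.val h)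
      have hna : ¬ (G2 2 p).Adj u v := by
        rw [adj_iff hp hmono]
        rintro ⟨-, h⟩
        rw [hZu, hZv2] at h
        exact absurd h (by decide)
      have hdist : (G2 2 p).dist u v = 2 := by
        refine le_antisymm (hub u v) ?_
        have h0 : (G2 2 p).dist u v ≠ 0 :=
          SimpleGraph.dist_ne_zero_iff_ne_and_reachable.mpr ⟨hne, reachable hp hmono u v⟩
        have h1 : (G2 2 p).dist u v ≠ 1 := fun h =>
          hna (SimpleGraph.dist_eq_one_iff_adj.mp h)
        omega
      show sSup {d | ∃ x y, (G2 2 p).dist x y = d} = 2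
      apply le_antisymm
      · refine csSup_le ⟨2, u, v, hdist⟩ ?_
        rintro d ⟨x, y, rfl⟩
        exact hub x y
      · refine le_csSup ⟨2, ?_⟩ ⟨u, v, hdist⟩
        rintro d ⟨x, y, rfl⟩
        exact hub x y
  · -- m ≥ 3
    intro hm3
    set i0 : Fin m := ⟨0, by omega⟩
    set i1 : Fin m := ⟨1, by omega⟩
    set i2 : Fin m := ⟨2, by omega⟩
    have hu1 : ({i0} : Finset (Fin m))ᶜ.Nonempty :=
      ⟨i1, Finset.mem_compl.mpr (by simp [Finset.mem_singleton, i0, i1, Fin.ext_iff])⟩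
    have hu2 : ({i0} : Finset (Fin m))ᶜ ≠ univ :=
      (Finset.compl_ne_univ_iff_nonempty _).mpr ⟨i0, Finset.mem_singleton_self i0⟩
    have hv1 : ({i1} : Finset (Fin m))ᶜ.Nonempty :=
      ⟨i0, Finset.mem_compl.mpr (by simp [Finset.mem_singleton, i0, i1, Fin.ext_iff])⟩
    have hv2 : ({i1} : Finset (Fin m))ᶜ ≠ univ :=
      (Finset.compl_ne_univ_iff_nonempty _).mpr ⟨i1, Finset.mem_singleton_self i1⟩
    set u := mkV hp hmono _ hu1 hu2 with hu
    set v := mkV hp hmono _ hv1 hv2 with hv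
    have hZu : Z m p u.1 = ({i0} : Finset (Fin m))ᶜ := Z_mkV hp hmono _ _ _
    have hZv : Z m p v.1 = ({i1} : Finset (Fin m))ᶜ := Z_mkV hp hmono _ _ _
    have hne : u ≠ v := by
      intro h
      have := hZu.symm.trans ((congrArg (fun w : Vtx m p => Z m p w.1) h).trans hZv)
      have := compl_inj_iff.mp this
      have := Finset.singleton_injective this
      simp [i0, i1, Fin.ext_iff] at this
    have hna : ¬ (G2 m p).Adj u v := by
      rw [adj_iff hp hmono]
      rintro ⟨-, h⟩
      rw [hZu, hZv] at h
      have : i2 ∈ ({i0} : Finset (Fin m))ᶜ ∩ ({i1} : Finset (Fin m))ᶜ := by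
        simp [Finset.mem_compl, i0, i1, i2, Fin.ext_iff]
      rw [h] at this
      simp at this
    have hcom : ∀ w, ¬((G2 m p).Adj u w ∧ (G2 m p).Adj w v) := by
      rintro w ⟨h1, h2⟩
      rw [adj_iff hp hmono] at h1 h2
      obtain ⟨j, hj⟩ := Z_nonempty hp hmono w
      have hj1 : j ∉ Z m p u.1 := fun h => by
        have : j ∈ (∅ : Finset (Fin m)) := h1.2 ▸ Finset.mem_inter.mpr ⟨h, hj⟩
        simp at this
      have hj2 : j ∉ Z m p v.1 := fun h => by
        have : j ∈ (∅ : Finset (Fin m)) := h2.2 ▸ Finset.mem_inter.mpr ⟨hj, h⟩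
        simp at this
      rw [hZu, Finset.mem_compl, not_not, Finset.mem_singleton] at hj1
      rw [hZv, Finset.mem_compl, not_not, Finset.mem_singleton] at hj2
      rw [hj1] at hj2
      simp [i0, i1, Fin.ext_iff] at hj2
    have hdist : (G2 m p).dist u v = 3 :=
      le_antisymm (dist_le_three hp hmono u v)
        (three_le_dist _ u v hne hna hcom (reachable hp hmono u v))
    show sSup {d | ∃ x y, (G2 m p).dist x y = d} = 3
    apply le_antisymm
    · refine csSup_le ⟨3, u, v, hdist⟩ ?_
      rintro d ⟨x, y, rfl⟩
      exact dist_le_three hp hmono x y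
    · refine le_csSup ⟨3, ?_⟩ ⟨u, v, hdist⟩
      rintro d ⟨x, y, rfl⟩
      exact dist_le_three hp hmono x y
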